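/- Let α > 0, a > 0 and E₀ < E₁ be reals, and define the density D(ε) := a·(ε − E₀)^α on [E₀, E₁]. For β > 0 set Z(β) := ∫_{E₀}^{E₁} D(ε)e^{−βε} dε, U₁(β) := Z(β)^{−1}∫_{E₀}^{E₁} ε·D(ε)e^{−βε} dε, U₂(β) := Z(β)^{−1}∫_{E₀}^{E₁} ε²·D(ε)e^{−βε} dε, and c(β) := β²(U₂(β) − U₁(β)²). Then lim_{β→∞} c(β) = α + 1. -/

import Mathlib

open Filter MeasureTheory Set

private lemma contPE (s : ℝ) (hs : 0 ≤ s) :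
    Continuous (fun t : ℝ => t ^ s * Real.exp (-t)) :=
  (continuous_iff_continuousAt.2 fun x =>
    Real.continuousAt_rpow_const x s (Or.inr hs)).mul (Real.continuous_exp.comp continuous_neg)

private lemma rpow_succ' {t : ℝ} (ht : 0 ≤ t) (s : ℝ) (hs : 0 < s) :
    t ^ (s + 1) = t ^ s * t := by
  rcases ht.eq_or_lt with h | h
  · rw [← h, Real.zero_rpow (by positivity : s + 1 ≠ 0), Real.zero_rpow hs.ne', mul_zero]
  · exact Real.rpow_add_one h.ne' s

private lemma tendstoG (s L : ℝ) (hs : 0 < s) (hL : 0 < L) :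
    Tendsto (fun β : ℝ => ∫ t in (0:ℝ)..β * L, t ^ s * Real.exp (-t)) atTop
      (nhds (Real.Gamma (s + 1))) := by
  have hint : IntegrableOn (fun t : ℝ => t ^ s * Real.exp (-t)) (Set.Ioi 0) := by
    refine (Real.GammaIntegral_convergent (s := s + 1) (by linarith)).congr_fun
      (fun x _ => ?_) measurableSet_Ioi
    rw [add_sub_cancel_right, mul_comm]
  have hval : (∫ t in Set.Ioi (0:ℝ), t ^ s * Real.exp (-t)) = Real.Gamma (s + 1) := by
    rw [Real.Gamma_eq_integral (by linarith : (0:ℝ) < s + 1)]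
    simp_rw [add_sub_cancel_right, mul_comm]
  have hb : Tendsto (fun β : ℝ => β * L) atTop atTop :=
    Tendsto.atTop_mul_const hL tendsto_id
  simpa [hval] using intervalIntegral_tendsto_integral_Ioi 0 hint hb

private lemma Gpos {s T : ℝ} (hs : 0 ≤ s) (hT : 0 < T) :
    0 < ∫ t in (0:ℝ)..T, t ^ s * Real.exp (-t) := by
  apply intervalIntegral.intervalIntegral_pos_of_pos_on
  · exact (contPE s hs).intervalIntegrable 0 T
  · intro x hx
    have h1 := Real.rpow_pos_of_pos hx.1 s
    positivity
  · exact hT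

private lemma transform (α : ℝ) {E₀ E₁ : ℝ} (hE : E₀ ≤ E₁) {β : ℝ} (hβ : 0 < β) (φ : ℝ → ℝ) :
    (∫ ε in E₀..E₁, φ ε * (ε - E₀) ^ α * Real.exp (-β * ε))
      = Real.exp (-β * E₀) / β ^ (α + 1) *
          ∫ t in (0:ℝ)..β * (E₁ - E₀), φ (E₀ + t / β) * t ^ α * Real.exp (-t) := by
  have hβ0 : β ≠ 0 := hβ.ne'
  have h1 : (∫ ε in E₀..E₁, φ ε * (ε - E₀) ^ α * Real.exp (-β * ε))
      = ∫ u in (0:ℝ)..(E₁ - E₀), φ (u + E₀) * u ^ α * Real.exp (-β * (u + E₀)) := by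
    have h := intervalIntegral.integral_comp_add_right (a := 0) (b := E₁ - E₀)
      (fun ε => φ ε * (ε - E₀) ^ α * Real.exp (-β * ε)) E₀
    simp only [zero_add, sub_add_cancel, add_sub_cancel_right] at h
    rw [← h]
  have hTpos : 0 ≤ β * (E₁ - E₀) := by nlinarith
  have h2 : ∀ t ∈ Set.uIcc (0:ℝ) (β * (E₁ - E₀)),
      φ (t / β + E₀) * (t / β) ^ α * Real.exp (-β * (t / β + E₀))
      = Real.exp (-β * E₀) / β ^ α * (φ (E₀ + t / β) * t ^ α * Real.exp (-t)) := by
    intro t ht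
    rw [Set.uIcc_of_le hTpos] at ht
    have ht0 : 0 ≤ t := ht.1
    rw [Real.div_rpow ht0 hβ.le α, add_comm (t / β) E₀,
      show -β * (E₀ + t / β) = -t + -β * E₀ by field_simp; ring, Real.exp_add]
    ring
  have hscale := intervalIntegral.integral_comp_div (a := 0) (b := β * (E₁ - E₀))
    (fun u => φ (u + E₀) * u ^ α * Real.exp (-β * (u + E₀))) hβ0
  simp only [zero_div, mul_div_cancel_left₀ _ hβ0, smul_eq_mul] at hscale
  rw [intervalIntegral.integral_congr h2, intervalIntegral.integral_const_mul] at hscale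
  rw [h1, show Real.exp (-β * E₀) / β ^ (α + 1)
      = β⁻¹ * (Real.exp (-β * E₀) / β ^ α) by
    rw [Real.rpow_add_one hβ0]; field_simp, mul_assoc, hscale,
    inv_mul_cancel_left₀ hβ0]


open Filter

/-- for a power-law density of states `D(ε) = a(ε−E₀)^α` on `[E₀,E₁]`, the
specific heat `c(β) = β²(U₂(β) − U₁(β)²)` tends to `α + 1` in the low-temperature limit
`β → ∞`. -/
theorem specific_heat_low_temperature_limit (α a E₀ E₁ : ℝ)
    (hα : 0 < α) (ha : 0 < a) (hE : E₀ < E₁) :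
    Tendsto
      (fun β : ℝ =>
        β ^ 2 *
          ((∫ ε in E₀..E₁, ε ^ 2 * (a * (ε - E₀) ^ α) * Real.exp (-β * ε)) /
              (∫ ε in E₀..E₁, a * (ε - E₀) ^ α * Real.exp (-β * ε))
            - ((∫ ε in E₀..E₁, ε * (a * (ε - E₀) ^ α) * Real.exp (-β * ε)) /
                (∫ ε in E₀..E₁, a * (ε - E₀) ^ α * Real.exp (-β * ε))) ^ 2))
      atTop (nhds (α + 1)) := by
  set L : ℝ := E₁ - E₀ with hLdef
  have hL : 0 < L := sub_pos.2 hE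
  have hΓ : 0 < Real.Gamma (α + 1) := Real.Gamma_pos_of_pos (by linarith)
  have h0 := tendstoG α L hα hL
  have h1 := tendstoG (α + 1) L (by linarith) hL
  have h2 := tendstoG (α + 2) L (by linarith) hL
  have e1 : Real.Gamma (α + 1 + 1) = (α + 1) * Real.Gamma (α + 1) :=
    Real.Gamma_add_one (by positivity)
  have e2 : Real.Gamma (α + 2 + 1) = (α + 2) * ((α + 1) * Real.Gamma (α + 1)) := by
    rw [Real.Gamma_add_one (by positivity), show α + 2 = α + 1 + 1 by ring, e1]
  have hne : Real.Gamma (α + 1) * Real.Gamma (α + 1) ≠ 0 := by positivity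
  have hmain := ((h2.mul h0).sub (h1.mul h1)).div (h0.mul h0) hne
  have hval : (Real.Gamma (α + 2 + 1) * Real.Gamma (α + 1)
      - Real.Gamma (α + 1 + 1) * Real.Gamma (α + 1 + 1))
      / (Real.Gamma (α + 1) * Real.Gamma (α + 1)) = α + 1 := by
    rw [e1, e2]; field_simp; ring
  rw [hval] at hmain
  refine hmain.congr' ?_
  filter_upwards [eventually_gt_atTop (0:ℝ)] with β hβ
  simp only [Pi.div_apply]
  have hβ0 : β ≠ 0 := hβ.ne'
  set T : ℝ := β * L with hTdef
  have hT : 0 < T := by positivity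
  set g0 : ℝ := ∫ t in (0:ℝ)..T, t ^ α * Real.exp (-t) with hg0def
  set g1 : ℝ := ∫ t in (0:ℝ)..T, t ^ (α + 1) * Real.exp (-t) with hg1def
  set g2 : ℝ := ∫ t in (0:ℝ)..T, t ^ (α + 2) * Real.exp (-t) with hg2def
  have hg0 : 0 < g0 := Gpos hα.le hT
  set C : ℝ := Real.exp (-β * E₀) / β ^ (α + 1) with hCdef
  have hC : 0 < C := div_pos (Real.exp_pos _) (Real.rpow_pos_of_pos hβ _)
  -- integrability facts
  have int0 : IntervalIntegrable (fun t : ℝ => t ^ α * Real.exp (-t)) MeasureTheory.volume 0 T :=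
    (contPE α hα.le).intervalIntegrable 0 T
  have int1 : IntervalIntegrable (fun t : ℝ => t ^ (α + 1) * Real.exp (-t)) MeasureTheory.volume 0 T :=
    (contPE (α + 1) (by linarith)).intervalIntegrable 0 T
  have int2 : IntervalIntegrable (fun t : ℝ => t ^ (α + 2) * Real.exp (-t)) MeasureTheory.volume 0 T :=
    (contPE (α + 2) (by linarith)).intervalIntegrable 0 T
  -- the three transformed integrals
  have t0 := transform α hE.le hβ (fun _ => (1:ℝ))
  simp only [one_mul] at t0
  have t1 := transform α hE.le hβ (fun x => x)
  have t2 := transform α hE.le hβ (fun x => x ^ 2)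
  simp only [← hLdef, ← hTdef, ← hCdef] at t0 t1 t2
  -- expand K1
  have k1 : (∫ t in (0:ℝ)..T, (E₀ + t / β) * t ^ α * Real.exp (-t))
      = E₀ * g0 + β⁻¹ * g1 := by
    rw [intervalIntegral.integral_congr (g := fun t =>
        E₀ * (t ^ α * Real.exp (-t)) + β⁻¹ * (t ^ (α + 1) * Real.exp (-t))) ?_]
    · rw [intervalIntegral.integral_add (int0.const_mul E₀) (int1.const_mul β⁻¹),
        intervalIntegral.integral_const_mul, intervalIntegral.integral_const_mul]
    · intro t ht
      rw [Set.uIcc_of_le hT.le] at ht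
      dsimp only
      rw [rpow_succ' ht.1 α hα]
      field_simp
  -- expand K2
  have k2 : (∫ t in (0:ℝ)..T, (E₀ + t / β) ^ 2 * t ^ α * Real.exp (-t))
      = E₀ ^ 2 * g0 + 2 * E₀ * β⁻¹ * g1 + β⁻¹ ^ 2 * g2 := by
    rw [intervalIntegral.integral_congr (g := fun t =>
        E₀ ^ 2 * (t ^ α * Real.exp (-t)) + 2 * E₀ * β⁻¹ * (t ^ (α + 1) * Real.exp (-t))
          + β⁻¹ ^ 2 * (t ^ (α + 2) * Real.exp (-t))) ?_]
    · rw [intervalIntegral.integral_add ((int0.const_mul _).add (int1.const_mul _))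
        (int2.const_mul _),
        intervalIntegral.integral_add (int0.const_mul _) (int1.const_mul _),
        intervalIntegral.integral_const_mul, intervalIntegral.integral_const_mul,
        intervalIntegral.integral_const_mul]
    · intro t ht
      rw [Set.uIcc_of_le hT.le] at ht
      dsimp only
      rw [show α + 2 = α + 1 + 1 by ring, rpow_succ' ht.1 (α + 1) (by linarith),
        rpow_succ' ht.1 α hα]
      field_simp
      ring
  rw [k1] at t1
  rw [k2] at t2
  -- rewrite original integrals
  have i0 : (∫ ε in E₀..E₁, a * (ε - E₀) ^ α * Real.exp (-β * ε)) = a * (C * g0) := by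
    simp only [mul_assoc]
    rw [intervalIntegral.integral_const_mul]
    simp only [← mul_assoc]
    rw [t0, ← hg0def]
    ring
  have i1 : (∫ ε in E₀..E₁, ε * (a * (ε - E₀) ^ α) * Real.exp (-β * ε))
      = a * (C * (E₀ * g0 + β⁻¹ * g1)) := by
    rw [show (fun ε => ε * (a * (ε - E₀) ^ α) * Real.exp (-β * ε))
        = fun ε => a * ((fun x => x) ε * (ε - E₀) ^ α * Real.exp (-β * ε))
      from funext fun ε => by ring, intervalIntegral.integral_const_mul, t1]
  have i2 : (∫ ε in E₀..E₁, ε ^ 2 * (a * (ε - E₀) ^ α) * Real.exp (-β * ε))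
      = a * (C * (E₀ ^ 2 * g0 + 2 * E₀ * β⁻¹ * g1 + β⁻¹ ^ 2 * g2)) := by
    rw [show (fun ε => ε ^ 2 * (a * (ε - E₀) ^ α) * Real.exp (-β * ε))
        = fun ε => a * ((fun x => x ^ 2) ε * (ε - E₀) ^ α * Real.exp (-β * ε))
      from funext fun ε => by ring, intervalIntegral.integral_const_mul, t2]
  rw [i0, i1, i2]
  have hac : a * C ≠ 0 := by positivity
  rw [show a * (C * (E₀ ^ 2 * g0 + 2 * E₀ * β⁻¹ * g1 + β⁻¹ ^ 2 * g2))
      = (a * C) * (E₀ ^ 2 * g0 + 2 * E₀ * β⁻¹ * g1 + β⁻¹ ^ 2 * g2) by ring,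
    show a * (C * (E₀ * g0 + β⁻¹ * g1)) = (a * C) * (E₀ * g0 + β⁻¹ * g1) by ring,
    show a * (C * g0) = (a * C) * g0 by ring,
    mul_div_mul_left _ _ hac, mul_div_mul_left _ _ hac]
  field_simp
  ring
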